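/- arXiv:1907.04712 — 2 statements merged into one kernel-verified Lean document; each statement's English description precedes it below -/
import Mathlib

section
/- Let D be an exchangeable Borel measure on M★∞ (marks in [0,∞)) such that D({x : v_1 = 0}) < ∞ and D({x : v_1 ≠ 0 and |log v_1| > ε}) < ∞ for every ε > 0. Then for every n ≥ 2, D({x : π = {{n}, ℕ∖{n}}} ∩ {x : v_1 ≠ 1}) = 0; that is, D-almost everywhere on the event that π consists of the singleton block {n} and the block ℕ∖{n}, the mark of the infinite block equals 1. -/
open MeasureTheory ProbabilityTheory Filter Topology

/-- A marked partition of `ℕ`: an equivalence relation together with a mark function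
that is constant on each block. -/
structure MarkedPartition where
  rel : ℕ → ℕ → Prop
  refl : ∀ i, rel i i
  symm : ∀ {i j}, rel i j → rel j i
  trans : ∀ {i j k}, rel i j → rel j k → rel i k
  v : ℕ → ℝ
  consistent : ∀ {i j}, rel i j → v i = v j

namespace MarkedPartition

/-- The σ-algebra on marked partitions, generated by the maps `x ↦ x.rel i j` and `x ↦ x.v i`. -/
instance : MeasurableSpace MarkedPartition :=
  (⨆ (i : ℕ) (j : ℕ), MeasurableSpace.comap (fun x : MarkedPartition => x.rel i j) ⊤) ⊔
    (⨆ i : ℕ, MeasurableSpace.comap (fun x : MarkedPartition => x.v i) (inferInstance))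

/-- Action of a permutation of `ℕ` on marked partitions. -/
def perm (σ : Equiv.Perm ℕ) (x : MarkedPartition) : MarkedPartition where
  rel i j := x.rel (σ i) (σ j)
  refl i := x.refl _
  symm h := x.symm h
  trans h h' := x.trans h h'
  v i := x.v (σ i)
  consistent h := x.consistent h

/-- The block containing `i`. -/
def block (x : MarkedPartition) (i : ℕ) : Set ℕ := {j | x.rel i j}

/-- Non-degenerate: every finite block has mark `0`. -/
def NonDegenerate (x : MarkedPartition) : Prop := ∀ i, (x.block i).Finite → x.v i = 0

/-- Least element of the block containing `i`. -/
noncomputable def leastOf (x : MarkedPartition) (i : ℕ) : ℕ := sInf (x.block i)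

open Classical in
/-- The label of the block of `x` containing `i`, blocks being labelled in increasing
order of their least elements (labels start at `1`). -/
noncomputable def label (x : MarkedPartition) (i : ℕ) : ℕ :=
  ((Finset.range (x.leastOf i + 1)).filter (fun m => x.leastOf m = m)).card

end MarkedPartition

/-- A permutation is finitely supported. -/
def FinSupp (σ : Equiv.Perm ℕ) : Prop := {n | σ n ≠ n}.Finite

/-- Lexicographic order on pairs `(s, v)`. -/
def lexLe (a b : ℝ × ℝ) : Prop := a.1 < b.1 ∨ (a.1 = b.1 ∧ a.2 ≤ b.2)

/-- Membership in the space `Z↓`. -/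
def MemZdown (z : ℕ → ℝ × ℝ) : Prop :=
  (∀ k, (z k).1 ∈ Set.Icc (0:ℝ) 1 ∧ 0 ≤ (z k).2) ∧
  (∀ k, lexLe (z (k + 1)) (z k)) ∧
  (∀ n, ∑ k ∈ Finset.range n, (z k).1 ≤ 1) ∧
  (∀ k, (z k).1 = 0 → (z k).2 = 0)

/-- `t_n = s_1 + … + s_n`. -/
def cumSum (z : ℕ → ℝ × ℝ) (n : ℕ) : ℝ := ∑ k ∈ Finset.range n, (z k).1

open Classical in
/-- Index of the paintbox interval containing `u`, if any. -/
noncomputable def pbIdx (z : ℕ → ℝ × ℝ) (u : ℝ) : Option ℕ :=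
  if h : ∃ n, cumSum z n ≤ u ∧ u < cumSum z (n + 1) then some (Nat.find h) else none

/-- The paintbox marked partition built from `z` and the sequence `u` of uniform samples. -/
noncomputable def paintbox (z : ℕ → ℝ × ℝ) (u : ℕ → ℝ) : MarkedPartition where
  rel i j := i = j ∨ ((pbIdx z (u i)).isSome ∧ pbIdx z (u i) = pbIdx z (u j))
  refl _ := Or.inl rfl
  symm h := by
    rcases h with h | ⟨hs, he⟩
    · exact Or.inl h.symm
    · exact Or.inr ⟨he ▸ hs, he.symm⟩
  trans h h' := by
    rcases h with rfl | ⟨hs, he⟩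
    · exact h'
    · rcases h' with rfl | ⟨hs', he'⟩
      · exact Or.inr ⟨hs, he⟩
      · exact Or.inr ⟨hs, he.trans he'⟩
  v i := (pbIdx z (u i)).elim 0 (fun n => (z n).2)
  consistent h := by
    rcases h with rfl | ⟨hs, he⟩
    · rfl
    · try dsimp only
      rw [he]

/-- The uniform distribution on `[0,1]`. -/
noncomputable def uniform01 : Measure ℝ := volume.restrict (Set.Icc 0 1)

/-- `U` is an i.i.d. sequence of uniform random variables on `[0,1]` under `μ`. -/
def IsIIDUniform {Θ : Type*} [MeasurableSpace Θ] (μ : Measure Θ) (U : ℕ → Θ → ℝ) : Prop :=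
  (∀ n, Measurable (U n)) ∧ iIndepFun U μ ∧
    ∀ n, μ.map (U n) = uniform01

/-- The paintbox measure `ρ_z`, the law of the paintbox construction driven by the
i.i.d. uniform sequence `U` defined on `(Θ, μ)`. -/
noncomputable def paintboxLaw {Θ : Type*} [MeasurableSpace Θ] (μ : Measure Θ)
    (U : ℕ → Θ → ℝ) (z : ℕ → ℝ × ℝ) : Measure MarkedPartition :=
  μ.map (fun θ => paintbox z (fun n => U n θ))

open Classical in
/-- `#(B ∩ [n]) / n`. -/
noncomputable def freqAvg (B : Set ℕ) (n : ℕ) : ℝ :=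
  (((Finset.range n).filter (fun j => j ∈ B)).card : ℝ) / n

/-- `B` has an asymptotic frequency. -/
def HasFreq (B : Set ℕ) : Prop := ∃ l : ℝ, Tendsto (freqAvg B) atTop (𝓝 l)

/-- The asymptotic frequency of `B` (junk value if the limit does not exist). -/
noncomputable def freq (B : Set ℕ) : ℝ := limUnder atTop (freqAvg B)

/-- `x` has asymptotic frequencies. -/
def MarkedPartition.HasFreqs (x : MarkedPartition) : Prop := ∀ i, HasFreq (x.block i)

/-- The set of least representatives of infinite blocks of `x` with positive asymptotic
frequency. -/
def MarkedPartition.posReps (x : MarkedPartition) : Set ℕ :=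
  {r | x.leastOf r = r ∧ (x.block r).Infinite ∧ 0 < freq (x.block r)}

/-- `g` is the `⪯`-nonincreasing enumeration `|x|↓` of the pairs
(asymptotic frequency, mark) over the infinite blocks of `x` with positive frequency,
completed by `(0,0)` terms. -/
def IsRankedFreqs (x : MarkedPartition) (g : ℕ → ℝ × ℝ) : Prop :=
  (∀ k, lexLe (g (k + 1)) (g k)) ∧
  ∃ e : ℕ → ℕ, Set.BijOn e {k | g k ≠ (0, 0)} x.posReps ∧
    ∀ k, g k ≠ (0, 0) → g k = (freq (x.block (e k)), x.v (e k))

namespace CosingletonAux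

lemma mp_inst_eq : MarkedPartition.instMeasurableSpace =
    (⨆ (i : ℕ) (j : ℕ), MeasurableSpace.comap (fun x : MarkedPartition => x.rel i j) ⊤) ⊔
      (⨆ i : ℕ, MeasurableSpace.comap (fun x : MarkedPartition => x.v i) inferInstance) := rfl

lemma measurable_rel (i j : ℕ) : Measurable (fun x : MarkedPartition => x.rel i j) := by
  rw [measurable_iff_comap_le, mp_inst_eq]
  exact le_sup_of_le_left (le_iSup₂ (f := fun i j =>
    MeasurableSpace.comap (fun x : MarkedPartition => x.rel i j) ⊤) i j)

lemma measurable_v (i : ℕ) : Measurable (fun x : MarkedPartition => x.v i) := by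
  rw [measurable_iff_comap_le, mp_inst_eq]
  exact le_sup_of_le_right (le_iSup (f := fun i =>
    MeasurableSpace.comap (fun x : MarkedPartition => x.v i) inferInstance) i)

lemma measurable_perm (σ : Equiv.Perm ℕ) : Measurable (MarkedPartition.perm σ) := by
  rw [measurable_iff_comap_le, mp_inst_eq,
    MeasurableSpace.comap_sup, MeasurableSpace.comap_iSup]
  refine sup_le (iSup_le fun i => ?_) ?_
  · rw [MeasurableSpace.comap_iSup]
    refine iSup_le fun j => ?_
    rw [MeasurableSpace.comap_comp]
    exact measurable_iff_comap_le.1 (measurable_rel (σ i) (σ j))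
  · rw [MeasurableSpace.comap_iSup]
    refine iSup_le fun i => ?_
    rw [MeasurableSpace.comap_comp]
    exact measurable_iff_comap_le.1 (measurable_v (σ i))

def spec (n : ℕ) (x : MarkedPartition) : Prop :=
  ∀ i j, x.rel i j ↔ ((i = n ∧ j = n) ∨ (i ≠ n ∧ j ≠ n))

lemma measurableSet_spec (n : ℕ) : MeasurableSet {x | spec n x} := by
  have h : {x | spec n x} = ⋂ i, ⋂ j,
      {x : MarkedPartition | x.rel i j ↔ ((i = n ∧ j = n) ∨ (i ≠ n ∧ j ≠ n))} := by
    ext x; simp [spec, Set.mem_iInter]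
  rw [h]
  refine MeasurableSet.iInter fun i => MeasurableSet.iInter fun j => ?_
  by_cases h' : ((i = n ∧ j = n) ∨ (i ≠ n ∧ j ≠ n))
  · simpa [h'] using measurableSet_setOf.2 (measurable_rel i j)
  · have hcm := (measurableSet_setOf.2 (measurable_rel i j)).compl
    rw [Set.compl_setOf] at hcm
    simpa [h'] using hcm

lemma measurableSet_specB (n : ℕ) {B : Set ℝ} (hB : MeasurableSet B) :
    MeasurableSet {x : MarkedPartition | spec n x ∧ x.v 0 ∈ B} := by
  have h : {x : MarkedPartition | spec n x ∧ x.v 0 ∈ B}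
      = {x | spec n x} ∩ (fun x : MarkedPartition => x.v 0) ⁻¹' B := rfl
  rw [h]
  exact (measurableSet_spec n).inter (measurable_v 0 hB)

lemma perm_preimage (n m : ℕ) (hn : n ≠ 0) (hm : m ≠ 0) (B : Set ℝ) :
    MarkedPartition.perm (Equiv.swap n m) ⁻¹' {x | spec n x ∧ x.v 0 ∈ B}
      = {x | spec m x ∧ x.v 0 ∈ B} := by
  have h0 : Equiv.swap n m 0 = 0 := Equiv.swap_apply_of_ne_of_ne (Ne.symm hn) (Ne.symm hm)
  have key1 : ∀ i : ℕ, Equiv.swap n m i = n ↔ i = m := fun i => by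
    rw [Equiv.swap_apply_eq_iff, Equiv.swap_apply_left]
  have key2 : ∀ i : ℕ, Equiv.swap n m i = m ↔ i = n := fun i => by
    rw [Equiv.swap_apply_eq_iff, Equiv.swap_apply_right]
  ext x
  simp only [Set.mem_preimage, Set.mem_setOf_eq]
  have hveq : (MarkedPartition.perm (Equiv.swap n m) x).v 0 = x.v 0 := by
    show x.v (Equiv.swap n m 0) = x.v 0
    rw [h0]
  rw [hveq]
  constructor
  · rintro ⟨hrel, hv⟩
    refine ⟨fun i j => ?_, hv⟩
    have h := hrel (Equiv.swap n m i) (Equiv.swap n m j)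
    have hsimp : (MarkedPartition.perm (Equiv.swap n m) x).rel
        (Equiv.swap n m i) (Equiv.swap n m j) ↔ x.rel i j := by
      show x.rel (Equiv.swap n m (Equiv.swap n m i)) (Equiv.swap n m (Equiv.swap n m j)) ↔ _
      rw [Equiv.swap_apply_self, Equiv.swap_apply_self]
    rw [hsimp] at h
    simp only [ne_eq, key1] at h
    exact h
  · rintro ⟨hrel, hv⟩
    refine ⟨fun i j => ?_, hv⟩
    show x.rel (Equiv.swap n m i) (Equiv.swap n m j) ↔ _
    rw [hrel (Equiv.swap n m i) (Equiv.swap n m j)]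
    simp only [ne_eq, key2]

lemma finSupp_swap (n m : ℕ) : FinSupp (Equiv.swap n m) := by
  apply Set.Finite.subset ((Set.finite_singleton m).insert n)
  intro k hk
  simp only [Set.mem_setOf_eq] at hk
  by_contra hc
  simp only [Set.mem_insert_iff, Set.mem_singleton_iff, not_or] at hc
  exact hk (Equiv.swap_apply_of_ne_of_ne hc.1 hc.2)

lemma measure_spec_eq (D : Measure MarkedPartition)
    (hexch : ∀ σ : Equiv.Perm ℕ, FinSupp σ → D.map (MarkedPartition.perm σ) = D)
    {n m : ℕ} (hn : n ≠ 0) (hm : m ≠ 0) {B : Set ℝ} (hB : MeasurableSet B) :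
    D {x | spec n x ∧ x.v 0 ∈ B} = D {x | spec m x ∧ x.v 0 ∈ B} :=
  calc D {x | spec n x ∧ x.v 0 ∈ B}
      = D.map (MarkedPartition.perm (Equiv.swap n m)) {x | spec n x ∧ x.v 0 ∈ B} := by
        rw [hexch _ (finSupp_swap n m)]
    _ = D (MarkedPartition.perm (Equiv.swap n m) ⁻¹' {x | spec n x ∧ x.v 0 ∈ B}) :=
        Measure.map_apply (measurable_perm _) (measurableSet_specB n hB)
    _ = D {x | spec m x ∧ x.v 0 ∈ B} := by rw [perm_preimage n m hn hm B]

lemma spec_disjoint {m m' : ℕ} (h : m ≠ m') {x : MarkedPartition}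
    (h1 : spec m x) (h2 : spec m' x) : False := by
  have hk1 : x.rel (m + m' + 1) m' := by
    rw [h1]
    right
    omega
  have hk2 := (h2 (m + m' + 1) m').1 hk1
  rcases hk2 with ⟨ha, _⟩ | ⟨_, hb⟩
  · omega
  · exact hb rfl

lemma spec_null (D : Measure MarkedPartition)
    (hexch : ∀ σ : Equiv.Perm ℕ, FinSupp σ → D.map (MarkedPartition.perm σ) = D)
    {n : ℕ} (hn : n ≠ 0) {B : Set ℝ} (hB : MeasurableSet B)
    (hfin : D {x | x.v 0 ∈ B} ≠ ⊤) :
    D {x | spec n x ∧ x.v 0 ∈ B} = 0 := by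
  by_contra hc
  have heq : ∀ k : ℕ, D {x | spec (k + 1) x ∧ x.v 0 ∈ B} = D {x | spec n x ∧ x.v 0 ∈ B} :=
    fun k => measure_spec_eq D hexch (Nat.succ_ne_zero k) hn hB
  have hdisj : Pairwise (Function.onFun Disjoint
      (fun k : ℕ => {x : MarkedPartition | spec (k + 1) x ∧ x.v 0 ∈ B})) := by
    intro k k' hkk'
    refine Set.disjoint_left.2 fun x hx hx' => ?_
    exact spec_disjoint (by omega : k + 1 ≠ k' + 1) hx.1 hx'.1
  have hU : D (⋃ k : ℕ, {x : MarkedPartition | spec (k + 1) x ∧ x.v 0 ∈ B}) = ⊤ := by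
    rw [measure_iUnion hdisj (fun k => measurableSet_specB (k + 1) hB)]
    simp only [heq]
    exact ENNReal.tsum_const_eq_top_of_ne_zero hc
  have hle : D (⋃ k : ℕ, {x : MarkedPartition | spec (k + 1) x ∧ x.v 0 ∈ B})
      ≤ D {x | x.v 0 ∈ B} := by
    refine measure_mono fun x hx => ?_
    rcases Set.mem_iUnion.1 hx with ⟨k, hk⟩
    exact hk.2
  rw [hU] at hle
  exact hfin (top_le_iff.1 hle)

end CosingletonAux

/-- **Mark of the co-singleton block.** Let `D` be an exchangeable measure on `M★∞` such
that `D(v_1 = 0) < ∞` and `D(v_1 ≠ 0, |log v_1| > ε) < ∞` for every `ε > 0`. Then for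
every `n ≥ 2` (here: every `n ≠ 0`, indices starting at `0`), `D`-almost everywhere on
the event that the partition consists of the singleton `{n}` and its complement, the
mark of the infinite block equals `1`. -/
theorem cosingleton_mark_one
    (D : Measure MarkedPartition)
    (hsupp : D {x | ¬ ((∀ i, 0 ≤ x.v i) ∧ x.NonDegenerate)} = 0)
    (hexch : ∀ σ : Equiv.Perm ℕ, FinSupp σ → D.map (MarkedPartition.perm σ) = D)
    (hfin0 : D {x | x.v 0 = 0} ≠ ⊤)
    (hfinlog : ∀ ε : ℝ, 0 < ε → D {x | x.v 0 ≠ 0 ∧ ε < |Real.log (x.v 0)|} ≠ ⊤) :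
    ∀ n : ℕ, n ≠ 0 →
      D {x | (∀ i j, x.rel i j ↔ ((i = n ∧ j = n) ∨ (i ≠ n ∧ j ≠ n))) ∧ x.v 0 ≠ 1} = 0 := by
  intro n hn
  have h0 : D {x | CosingletonAux.spec n x ∧ x.v 0 ∈ ({0} : Set ℝ)} = 0 :=
    CosingletonAux.spec_null D hexch hn (measurableSet_singleton 0) hfin0
  have hk : ∀ k : ℕ, D {x | CosingletonAux.spec n x ∧
      x.v 0 ∈ {t : ℝ | t ≠ 0 ∧ 1 / ((k : ℝ) + 1) < |Real.log t|}} = 0 := by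
    intro k
    have hε : (0 : ℝ) < 1 / ((k : ℝ) + 1) := by positivity
    have hBm : MeasurableSet {t : ℝ | t ≠ 0 ∧ 1 / ((k : ℝ) + 1) < |Real.log t|} := by
      have h : {t : ℝ | t ≠ 0 ∧ 1 / ((k : ℝ) + 1) < |Real.log t|}
          = ({0}ᶜ : Set ℝ) ∩ (fun t => |Real.log t|) ⁻¹' Set.Ioi (1 / ((k : ℝ) + 1)) := by
        ext t
        simp [Set.mem_setOf_eq]
      rw [h]
      exact (measurableSet_singleton 0).compl.inter
        (Real.measurable_log.abs measurableSet_Ioi)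
    exact CosingletonAux.spec_null D hexch hn hBm (hfinlog _ hε)
  have hsub : {x : MarkedPartition |
        (∀ i j, x.rel i j ↔ ((i = n ∧ j = n) ∨ (i ≠ n ∧ j ≠ n))) ∧ x.v 0 ≠ 1}
      ⊆ {x | ¬ ((∀ i, 0 ≤ x.v i) ∧ x.NonDegenerate)} ∪
        ({x | CosingletonAux.spec n x ∧ x.v 0 ∈ ({0} : Set ℝ)} ∪
          ⋃ k : ℕ, {x | CosingletonAux.spec n x ∧
            x.v 0 ∈ {t : ℝ | t ≠ 0 ∧ 1 / ((k : ℝ) + 1) < |Real.log t|}}) := by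
    rintro x ⟨hspec, hv1⟩
    by_cases hN : (∀ i, 0 ≤ x.v i) ∧ x.NonDegenerate
    · by_cases hv0 : x.v 0 = 0
      · exact Or.inr (Or.inl ⟨hspec, hv0⟩)
      · have hpos : 0 < x.v 0 := lt_of_le_of_ne (hN.1 0) (Ne.symm hv0)
        have hlog : Real.log (x.v 0) ≠ 0 := Real.log_ne_zero_of_pos_of_ne_one hpos hv1
        obtain ⟨k, hk'⟩ := exists_nat_one_div_lt (abs_pos.2 hlog)
        exact Or.inr (Or.inr (Set.mem_iUnion.2 ⟨k, hspec, hv0, hk'⟩))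
    · exact Or.inl hN
  exact measure_mono_null hsub
    (measure_union_null hsupp (measure_union_null h0 (measure_iUnion_null hk)))
end

section
/- Let f : [0,∞) → [0,∞) be Borel measurable, let α, β ∈ ℝ and v > 0. Define I_f(u) = ∫₀^u f(r)^β dr ∈ [0,∞] (Lebesgue integral, with the convention 0^β := 0), τ_f(s) = inf{u ≥ 0 : I_f(u) = s} ∈ [0,∞] (with inf ∅ := ∞), and h(u) := v·f(v^α u). Then for every s ≥ 0: τ_h(s) = v^{−α} · τ_f(v^{α−β} s), with the convention v^{−α}·∞ := ∞. -/
open MeasureTheory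
open scoped ENNReal

/-- `v^β` with the convention `0^β = 0`, as an extended nonnegative real. -/
noncomputable def powE (v β : ℝ) : ℝ≥0∞ := if v = 0 then 0 else ENNReal.ofReal (v ^ β)

/-- `I_f(u) = ∫₀^u f(r)^β dr ∈ [0,∞]`. -/
noncomputable def Ifun (f : ℝ → ℝ) (β : ℝ) (u : ℝ) : ℝ≥0∞ :=
  ∫⁻ r in Set.Ioc (0:ℝ) u, powE (f r) β

/-- `τ_f(s) = inf {u ≥ 0 : I_f(u) = s} ∈ [0,∞]`, with `inf ∅ = ∞`. -/
noncomputable def tauFun (f : ℝ → ℝ) (β : ℝ) (s : ℝ) : ℝ≥0∞ :=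
  sInf (ENNReal.ofReal '' {u : ℝ | 0 ≤ u ∧ Ifun f β u = ENNReal.ofReal s})

lemma powE_meas {f : ℝ → ℝ} (hf : Measurable f) (β : ℝ) :
    Measurable fun r => powE (f r) β := by
  unfold powE
  exact Measurable.ite (hf (measurableSet_singleton 0)) measurable_const
    (ENNReal.measurable_ofReal.comp (by fun_prop : Measurable fun r => f r ^ β))

lemma powE_mul {v x : ℝ} (hv : 0 < v) (hx : 0 ≤ x) (β : ℝ) :
    powE (v * x) β = ENNReal.ofReal (v ^ β) * powE x β := by
  unfold powE
  rcases eq_or_lt_of_le hx with h | h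
  · simp [← h]
  · rw [if_neg (by positivity), if_neg h.ne',
      Real.mul_rpow hv.le hx, ENNReal.ofReal_mul (by positivity)]

lemma lint_scale {g : ℝ → ℝ≥0∞} (hg : Measurable g) {a : ℝ} (ha : 0 < a) (u : ℝ) :
    ∫⁻ r in Set.Ioc (0:ℝ) u, g (a * r) =
      ENNReal.ofReal a⁻¹ * ∫⁻ x in Set.Ioc (0:ℝ) (a * u), g x := by
  have hmap := Real.map_volume_mul_left (a := a) ha.ne'
  have hpre : (fun x => a * x) ⁻¹' Set.Ioc (0:ℝ) (a * u) = Set.Ioc 0 u := by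
    ext x
    simp only [Set.mem_preimage, Set.mem_Ioc, mul_pos_iff_of_pos_left, ha,
      mul_le_mul_iff_right₀ ha, and_congr_left_iff]
  calc ∫⁻ r in Set.Ioc (0:ℝ) u, g (a * r)
      = ∫⁻ x in Set.Ioc (0:ℝ) (a*u), g x ∂(Measure.map (a * ·) volume) := by
        rw [setLIntegral_map measurableSet_Ioc hg (measurable_const_mul a), hpre]
    _ = ENNReal.ofReal a⁻¹ * ∫⁻ x in Set.Ioc (0:ℝ) (a * u), g x := by
        rw [hmap, abs_of_pos (inv_pos.mpr ha), Measure.restrict_smul,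
          lintegral_smul_measure, smul_eq_mul]

lemma mul_sInf_enn {c : ℝ≥0∞} (hc0 : c ≠ 0) (hct : c ≠ ⊤) (T : Set ℝ≥0∞) :
    sInf ((fun x => c * x) '' T) = c * sInf T := by
  rw [sInf_image', sInf_eq_iInf', ENNReal.mul_iInf_of_ne hc0 hct]

/-- **Scaling of Lamperti-type time changes.** For Borel `f : [0,∞) → [0,∞)`, `α, β ∈ ℝ`,
`v > 0` and `h(u) = v·f(v^α u)`, one has `τ_h(s) = v^{−α}·τ_f(v^{α−β} s)` for every
`s ≥ 0` (with the convention `v^{−α}·∞ = ∞`). -/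
theorem timeChange_scaling (f : ℝ → ℝ) (hf : Measurable f) (hf0 : ∀ r, 0 ≤ f r)
    (α β v : ℝ) (hv : 0 < v) (s : ℝ) (hs : 0 ≤ s) :
    tauFun (fun u => v * f (v ^ α * u)) β s =
      ENNReal.ofReal (v ^ (-α)) * tauFun f β (v ^ (α - β) * s) := by
  have hva : (0:ℝ) < v ^ α := Real.rpow_pos_of_pos hv α
  have hvna : (0:ℝ) < v ^ (-α) := Real.rpow_pos_of_pos hv _
  have key : ∀ u : ℝ, Ifun (fun u => v * f (v ^ α * u)) β u
      = ENNReal.ofReal (v ^ (β - α)) * Ifun f β (v ^ α * u) := by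
    intro u
    unfold Ifun
    simp only [fun r => powE_mul hv (hf0 (v ^ α * r)) β]
    rw [lintegral_const_mul _ (show Measurable fun r => powE (f (v ^ α * r)) β from (powE_meas hf β).comp (measurable_const_mul (v ^ α))),
      lint_scale (powE_meas hf β) hva u, ← mul_assoc,
      ← ENNReal.ofReal_mul (by positivity)]
    congr 2
    rw [← Real.rpow_neg hv.le, ← Real.rpow_add hv, sub_eq_add_neg]
  have hcan : ENNReal.ofReal (v ^ (α - β)) * ENNReal.ofReal (v ^ (β - α)) = 1 := by
    rw [← ENNReal.ofReal_mul (by positivity), ← Real.rpow_add hv]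
    norm_num
  have hiff : ∀ u : ℝ, (Ifun (fun u => v * f (v ^ α * u)) β u = ENNReal.ofReal s ↔
      Ifun f β (v ^ α * u) = ENNReal.ofReal (v ^ (α - β) * s)) := by
    intro u
    rw [key u, ENNReal.ofReal_mul (by positivity)]
    constructor
    · intro h
      rw [← h, ← mul_assoc, hcan, one_mul]
    · intro h
      rw [h, ← mul_assoc, ← ENNReal.ofReal_mul (by positivity), ← Real.rpow_add hv]
      norm_num
  have hset : ENNReal.ofReal '' {u : ℝ | 0 ≤ u ∧
        Ifun (fun u => v * f (v ^ α * u)) β u = ENNReal.ofReal s}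
      = (fun x => ENNReal.ofReal (v ^ (-α)) * x) ''
        (ENNReal.ofReal '' {w : ℝ | 0 ≤ w ∧
          Ifun f β w = ENNReal.ofReal (v ^ (α - β) * s)}) := by
    rw [Set.image_image]
    ext x
    simp only [Set.mem_image, Set.mem_setOf_eq]
    constructor
    · rintro ⟨u, ⟨hu0, hIu⟩, rfl⟩
      refine ⟨v ^ α * u, ⟨by positivity, (hiff u).mp hIu⟩, ?_⟩
      rw [← ENNReal.ofReal_mul hvna.le, ← mul_assoc, ← Real.rpow_add hv]
      norm_num
    · rintro ⟨w, ⟨hw0, hIw⟩, rfl⟩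
      refine ⟨v ^ (-α) * w, ⟨by positivity, ?_⟩, ENNReal.ofReal_mul hvna.le⟩
      have : v ^ α * (v ^ (-α) * w) = w := by
        rw [← mul_assoc, ← Real.rpow_add hv]; norm_num
      rw [hiff, this]; exact hIw
  rw [tauFun, hset, mul_sInf_enn (by simp [hvna]) ENNReal.ofReal_ne_top, tauFun]
end
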